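/- Laplacian of the right slice kernel, first step (quaternionic case): for fixed s ∈ ℍ and x ∈ ℍ with s² − 2Re(x)s + |x|² ≠ 0, define S_R(s,x) = (s² − 2Re(x)s + |x|²)^{-1}(s − x̄). Then the four-dimensional Laplacian in x satisfies Δ S_R(s,x) = −4 (s² − 2Re(x)s + |x|²)^{-2}(s − x̄). -/

import Mathlib

open Quaternion

/-- The second directional derivative of `f : ℍ → ℍ` at `q` in the direction `d`,
i.e. `d²/dt² f(q + t d)` at `t = 0`. -/
noncomputable def dir2 (f : Quaternion ℝ → Quaternion ℝ) (d q : Quaternion ℝ) : Quaternion ℝ :=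
  deriv (fun t : ℝ => deriv (fun u : ℝ => f (q + u • d)) t) 0

/-- The right slice kernel `S_R(s,x) = (s² - 2Re(x)s + |x|²)⁻¹ (s - x̄)`. -/
noncomputable def SRkernel (s y : Quaternion ℝ) : Quaternion ℝ :=
  (s * s - ((2 * y.re : ℝ) : Quaternion ℝ) * s +
    ((Quaternion.normSq y : ℝ) : Quaternion ℝ))⁻¹ * (s - star y)

noncomputable def Aq (s y : Quaternion ℝ) : Quaternion ℝ :=
  s * s - ((2 * y.re : ℝ) : Quaternion ℝ) * s + ((Quaternion.normSq y : ℝ) : Quaternion ℝ)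

lemma SRkernel_eq (s y : Quaternion ℝ) : SRkernel s y = (Aq s y)⁻¹ * (s - star y) := rfl

lemma coe_two_H : (((2:ℝ)) : Quaternion ℝ) = (2 : Quaternion ℝ) := by
  rw [show (2:ℝ) = 1+1 by norm_num]; push_cast; norm_num

lemma coe_four_H : (((4:ℝ)) : Quaternion ℝ) = (4 : Quaternion ℝ) := by
  rw [show (4:ℝ) = 1+1+1+1 by norm_num]; push_cast; norm_num

lemma coe_negtwo_H : (((-2:ℝ)) : Quaternion ℝ) = (-2 : Quaternion ℝ) := by
  push_cast [coe_two_H]; ring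

lemma hasDerivAt_inv_comp {f : ℝ → Quaternion ℝ} {f' : Quaternion ℝ} {t : ℝ}
    (hf : HasDerivAt f f' t) (h0 : f t ≠ 0) :
    HasDerivAt (fun u => (f u)⁻¹) (-((f t)⁻¹ * f' * (f t)⁻¹)) t := by
  have := (hasFDerivAt_inv' (𝕜 := ℝ) h0).comp_hasDerivAt t hf
  simpa [Function.comp_def] using this

lemma dir2_eq (s x d B : Quaternion ℝ) (hA : Aq s x ≠ 0)
    (hQ : ∀ u : ℝ, Aq s (x + u • d) = Aq s x + u • B + (u ^ 2) • (1 : Quaternion ℝ)) :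
    dir2 (SRkernel s) d x =
      2 * ((Aq s x)⁻¹ * B * (Aq s x)⁻¹ * B * (Aq s x)⁻¹) * (s - star x)
      - 2 * ((Aq s x)⁻¹ * (Aq s x)⁻¹) * (s - star x)
      + 2 * ((Aq s x)⁻¹ * B * (Aq s x)⁻¹) * star d := by
  set A := Aq s x with hAdef
  set P := A⁻¹ with hPdef
  set E := s - star x with hEdef
  set M : ℝ → Quaternion ℝ := fun u => A + u • B + (u ^ 2) • (1 : Quaternion ℝ) with hMdef
  set N : ℝ → Quaternion ℝ := fun u => E - u • (star d) with hNdef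
  have hfun : (fun u : ℝ => SRkernel s (x + u • d)) = fun u => (M u)⁻¹ * N u := by
    funext u
    rw [SRkernel_eq, hQ u]
    simp [hMdef, hNdef, hEdef, star_add, sub_add_eq_sub_sub]
  have hM : ∀ t : ℝ, HasDerivAt M (B + (2 * t) • (1 : Quaternion ℝ)) t := by
    intro t
    have h1 : HasDerivAt (fun u : ℝ => u • B) ((1 : ℝ) • B) t := (hasDerivAt_id t).smul_const B
    have h2 := (hasDerivAt_pow 2 t).smul_const (1 : Quaternion ℝ)
    have := ((hasDerivAt_const t A).add h1).add h2
    simpa [Pi.add_def] using this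
  have hN : ∀ t : ℝ, HasDerivAt N (-(star d)) t := by
    intro t
    simpa [Pi.sub_def] using (hasDerivAt_const t E).sub ((hasDerivAt_id t).smul_const (star d))
  have hM0 : M 0 = A := by simp [hMdef]
  have hU : ∀ᶠ t in nhds 0, M t ≠ 0 := by
    have hc : ContinuousAt M 0 := (hM 0).continuousAt
    have : M 0 ≠ 0 := by rw [hM0]; exact hA
    exact hc.eventually_ne this
  have hG : ∀ t : ℝ, M t ≠ 0 → HasDerivAt (fun u : ℝ => SRkernel s (x + u • d))
      (-((M t)⁻¹ * (B + (2 * t) • (1 : Quaternion ℝ)) * (M t)⁻¹) * N t + (M t)⁻¹ * -(star d)) t := by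
    intro t ht
    rw [hfun]
    exact (hasDerivAt_inv_comp (hM t) ht).mul (hN t)
  have hEv : (fun t : ℝ => deriv (fun u : ℝ => SRkernel s (x + u • d)) t) =ᶠ[nhds 0]
      (fun t : ℝ => -((M t)⁻¹ * (B + (2 * t) • (1 : Quaternion ℝ)) * (M t)⁻¹) * N t
        + (M t)⁻¹ * -(star d)) :=
    hU.mono fun t ht => (hG t ht).deriv
  rw [dir2, hEv.deriv_eq]
  have hMne : M 0 ≠ 0 := by rw [hM0]; exact hA
  have hI : HasDerivAt (fun t : ℝ => (M t)⁻¹)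
      (-((M 0)⁻¹ * (B + ((2:ℝ) * 0) • (1 : Quaternion ℝ)) * (M 0)⁻¹)) 0 :=
    hasDerivAt_inv_comp (hM 0) hMne
  have hW : HasDerivAt (fun t : ℝ => B + (2 * t) • (1 : Quaternion ℝ)) ((2 : ℝ) • (1 : Quaternion ℝ)) 0 := by
    have := ((hasDerivAt_id (0 : ℝ)).const_mul 2).smul_const (1 : Quaternion ℝ)
    simpa [Pi.add_def] using (hasDerivAt_const (0 : ℝ) B).add this
  have hGd := ((((hI.mul hW).mul hI).neg.mul (hN 0)).add (hI.mul_const (-(star d))))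
  rw [HasDerivAt.deriv (f := fun t : ℝ => -((M t)⁻¹ * (B + (2 * t) • (1 : Quaternion ℝ)) * (M t)⁻¹) * N t
          + (M t)⁻¹ * -(star d)) hGd]
  simp only [Pi.mul_apply, Pi.neg_apply, hM0, hNdef, hEdef, mul_zero, zero_smul, add_zero, zero_sub, sub_zero]
  simp only [← hPdef, ← Quaternion.coe_mul_eq_smul, mul_one]
  simp only [coe_two_H]
  noncomm_ring

lemma hQ0 (s x : Quaternion ℝ) (u : ℝ) : Aq s (x + u • (1 : Quaternion ℝ)) =
    Aq s x + u • (((2 * x.re : ℝ) : Quaternion ℝ) - ((2:ℝ) : Quaternion ℝ) * s)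
      + (u ^ 2) • (1 : Quaternion ℝ) := by
  ext <;>
    simp [Aq, Quaternion.normSq_def', Quaternion.re_mul, Quaternion.imI_mul,
      Quaternion.imJ_mul, Quaternion.imK_mul, ← Quaternion.coe_pow] <;> ring

lemma hQ1 (s x d : Quaternion ℝ) (hd : d = (⟨0,1,0,0⟩ : Quaternion ℝ)) (u : ℝ) :
    Aq s (x + u • d) =
    Aq s x + u • (((2 * x.imI : ℝ) : Quaternion ℝ)) + (u ^ 2) • (1 : Quaternion ℝ) := by
  obtain ⟨e0, e1, e2, e3⟩ : d.re = 0 ∧ d.imI = 1 ∧ d.imJ = 0 ∧ d.imK = 0 := by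
    subst hd; exact ⟨rfl, rfl, rfl, rfl⟩
  ext <;>
    simp [Aq, Quaternion.normSq_def', Quaternion.re_mul, Quaternion.imI_mul,
      Quaternion.imJ_mul, Quaternion.imK_mul, ← Quaternion.coe_pow, Quaternion.re_smul, e0, e1, e2, e3] <;> ring

lemma hQ2 (s x d : Quaternion ℝ) (hd : d = (⟨0,0,1,0⟩ : Quaternion ℝ)) (u : ℝ) :
    Aq s (x + u • d) =
    Aq s x + u • (((2 * x.imJ : ℝ) : Quaternion ℝ)) + (u ^ 2) • (1 : Quaternion ℝ) := by
  obtain ⟨e0, e1, e2, e3⟩ : d.re = 0 ∧ d.imI = 0 ∧ d.imJ = 1 ∧ d.imK = 0 := by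
    subst hd; exact ⟨rfl, rfl, rfl, rfl⟩
  ext <;>
    simp [Aq, Quaternion.normSq_def', Quaternion.re_mul, Quaternion.imI_mul,
      Quaternion.imJ_mul, Quaternion.imK_mul, ← Quaternion.coe_pow, Quaternion.re_smul, e0, e1, e2, e3] <;> ring

lemma hQ3 (s x d : Quaternion ℝ) (hd : d = (⟨0,0,0,1⟩ : Quaternion ℝ)) (u : ℝ) :
    Aq s (x + u • d) =
    Aq s x + u • (((2 * x.imK : ℝ) : Quaternion ℝ)) + (u ^ 2) • (1 : Quaternion ℝ) := by
  obtain ⟨e0, e1, e2, e3⟩ : d.re = 0 ∧ d.imI = 0 ∧ d.imJ = 0 ∧ d.imK = 1 := by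
    subst hd; exact ⟨rfl, rfl, rfl, rfl⟩
  ext <;>
    simp [Aq, Quaternion.normSq_def', Quaternion.re_mul, Quaternion.imI_mul,
      Quaternion.imJ_mul, Quaternion.imK_mul, ← Quaternion.coe_pow, Quaternion.re_smul, e0, e1, e2, e3] <;> ring

lemma final_algebra (A P E B0 B1 B2 B3 S0 S1 S2 S3 : Quaternion ℝ)
    (hAP : A * P = 1)
    (h0 : ∀ z, P * (B0 * z) = B0 * (P * z))
    (h1 : ∀ z, P * (B1 * z) = B1 * (P * z))
    (h2 : ∀ z, P * (B2 * z) = B2 * (P * z))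
    (h3 : ∀ z, P * (B3 * z) = B3 * (P * z))
    (key1 : B0 * B0 + B1 * B1 + B2 * B2 + B3 * B3 = ((4:ℝ) : Quaternion ℝ) * A)
    (key3 : B0 * S0 + B1 * S1 + B2 * S2 + B3 * S3 = ((-2:ℝ) : Quaternion ℝ) * E) :
    (2 * (P * B0 * P * B0 * P) * E - 2 * (P * P) * E + 2 * (P * B0 * P) * S0)
      + (2 * (P * B1 * P * B1 * P) * E - 2 * (P * P) * E + 2 * (P * B1 * P) * S1)
      + (2 * (P * B2 * P * B2 * P) * E - 2 * (P * P) * E + 2 * (P * B2 * P) * S2)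
      + (2 * (P * B3 * P * B3 * P) * E - 2 * (P * P) * E + 2 * (P * B3 * P) * S3)
      = -4 * P ^ 2 * E := by
  calc
    (2 * (P * B0 * P * B0 * P) * E - 2 * (P * P) * E + 2 * (P * B0 * P) * S0)
      + (2 * (P * B1 * P * B1 * P) * E - 2 * (P * P) * E + 2 * (P * B1 * P) * S1)
      + (2 * (P * B2 * P * B2 * P) * E - 2 * (P * P) * E + 2 * (P * B2 * P) * S2)
      + (2 * (P * B3 * P * B3 * P) * E - 2 * (P * P) * E + 2 * (P * B3 * P) * S3)
      = (2 * (P * (B0 * (P * (B0 * (P * E))))) + 2 * (P * (B1 * (P * (B1 * (P * E)))))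
          + 2 * (P * (B2 * (P * (B2 * (P * E))))) + 2 * (P * (B3 * (P * (B3 * (P * E))))))
        - 8 * (P * (P * E))
        + (2 * (P * (B0 * (P * S0))) + 2 * (P * (B1 * (P * S1)))
          + 2 * (P * (B2 * (P * S2))) + 2 * (P * (B3 * (P * S3)))) := by
        noncomm_ring
    _ = (2 * (B0 * (B0 * (P * (P * (P * E))))) + 2 * (B1 * (B1 * (P * (P * (P * E)))))
          + 2 * (B2 * (B2 * (P * (P * (P * E))))) + 2 * (B3 * (B3 * (P * (P * (P * E))))))
        - 8 * (P * (P * E))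
        + (2 * (P * (P * (B0 * S0))) + 2 * (P * (P * (B1 * S1)))
          + 2 * (P * (P * (B2 * S2))) + 2 * (P * (P * (B3 * S3)))) := by
        rw [← h0 S0, ← h1 S1, ← h2 S2, ← h3 S3]
        simp only [h0, h1, h2, h3]
    _ = 2 * ((B0 * B0 + B1 * B1 + B2 * B2 + B3 * B3) * (P * (P * (P * E))))
        - 8 * (P * (P * E))
        + 2 * (P * (P * (B0 * S0 + B1 * S1 + B2 * S2 + B3 * S3))) := by
        noncomm_ring
    _ = 2 * (((4:ℝ) : Quaternion ℝ) * (A * (P * (P * (P * E)))))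
        - 8 * (P * (P * E))
        + 2 * (P * (P * (((-2:ℝ) : Quaternion ℝ) * E))) := by
        rw [key1, key3]; noncomm_ring
    _ = 2 * (4 * ((A * P) * (P * (P * E))))
        - 8 * (P * (P * E))
        + 2 * (P * (P * ((-2) * E))) := by
        rw [coe_four_H, coe_negtwo_H]; noncomm_ring
    _ = -4 * P ^ 2 * E := by
        rw [hAP]; noncomm_ring

lemma commute_swap {P B : Quaternion ℝ} (h : Commute P B) :
    ∀ z : Quaternion ℝ, P * (B * z) = B * (P * z) := fun z => by
  rw [← mul_assoc, h.eq, mul_assoc]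

lemma hPB0' (s x : Quaternion ℝ) :
    Commute (Aq s x)⁻¹ (((2 * x.re : ℝ) : Quaternion ℝ) - ((2:ℝ) : Quaternion ℝ) * s) := by
  have hcs : Commute s (Aq s x) := by
    unfold Aq
    exact (((Commute.refl s).mul_right (Commute.refl s)).sub_right
      ((Quaternion.coe_commute (2 * x.re) s).symm.mul_right (Commute.refl s))).add_right
      (Quaternion.coe_commute (Quaternion.normSq x) s).symm
  exact ((Quaternion.coe_commute (2 * x.re) _).symm).sub_right
    (((Quaternion.coe_commute (2:ℝ) _).symm).mul_right hcs.inv_right₀.symm)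

lemma key1' (s x : Quaternion ℝ) :
    (((2 * x.re : ℝ) : Quaternion ℝ) - ((2:ℝ) : Quaternion ℝ) * s)
        * (((2 * x.re : ℝ) : Quaternion ℝ) - ((2:ℝ) : Quaternion ℝ) * s)
      + ((2 * x.imI : ℝ) : Quaternion ℝ) * ((2 * x.imI : ℝ) : Quaternion ℝ)
      + ((2 * x.imJ : ℝ) : Quaternion ℝ) * ((2 * x.imJ : ℝ) : Quaternion ℝ)
      + ((2 * x.imK : ℝ) : Quaternion ℝ) * ((2 * x.imK : ℝ) : Quaternion ℝ)
      = ((4:ℝ) : Quaternion ℝ) * Aq s x := by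
  ext <;>
    simp [Aq, Quaternion.normSq_def', Quaternion.re_mul, Quaternion.imI_mul,
      Quaternion.imJ_mul, Quaternion.imK_mul, ← Quaternion.coe_pow] <;> ring

lemma key3' (s x d1 d2 d3 : Quaternion ℝ) (h1 : d1 = (⟨0,1,0,0⟩ : Quaternion ℝ))
    (h2 : d2 = (⟨0,0,1,0⟩ : Quaternion ℝ)) (h3 : d3 = (⟨0,0,0,1⟩ : Quaternion ℝ)) :
    (((2 * x.re : ℝ) : Quaternion ℝ) - ((2:ℝ) : Quaternion ℝ) * s) * star (1 : Quaternion ℝ)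
      + ((2 * x.imI : ℝ) : Quaternion ℝ) * star d1
      + ((2 * x.imJ : ℝ) : Quaternion ℝ) * star d2
      + ((2 * x.imK : ℝ) : Quaternion ℝ) * star d3
      = ((-2:ℝ) : Quaternion ℝ) * (s - star x) := by
  obtain ⟨a0, a1, a2, a3⟩ : d1.re = 0 ∧ d1.imI = 1 ∧ d1.imJ = 0 ∧ d1.imK = 0 := by
    subst h1; exact ⟨rfl, rfl, rfl, rfl⟩
  obtain ⟨b0, b1, b2, b3⟩ : d2.re = 0 ∧ d2.imI = 0 ∧ d2.imJ = 1 ∧ d2.imK = 0 := by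
    subst h2; exact ⟨rfl, rfl, rfl, rfl⟩
  obtain ⟨c0, c1, c2, c3⟩ : d3.re = 0 ∧ d3.imI = 0 ∧ d3.imJ = 0 ∧ d3.imK = 1 := by
    subst h3; exact ⟨rfl, rfl, rfl, rfl⟩
  ext <;>
    simp [Quaternion.re_mul, Quaternion.imI_mul,
      Quaternion.imJ_mul, Quaternion.imK_mul, Quaternion.re_star, Quaternion.imI_star,
      Quaternion.imJ_star, Quaternion.imK_star, a0, a1, a2, a3, b0, b1, b2, b3, c0, c1, c2, c3] <;> ring

set_option maxHeartbeats 1000000 in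
/-- Laplacian of the right slice kernel (quaternionic case, `h = 1`, `n = 3`): wherever
`s² - 2Re(x)s + |x|²` is nonzero,
`Δ S_R(s,x) = -4 (s² - 2Re(x)s + |x|²)⁻² (s - x̄)`. -/
theorem laplacian_right_slice_kernel (s x : Quaternion ℝ)
    (h : s * s - ((2 * x.re : ℝ) : Quaternion ℝ) * s +
      ((Quaternion.normSq x : ℝ) : Quaternion ℝ) ≠ 0) :
    dir2 (SRkernel s) 1 x +
      dir2 (SRkernel s) (⟨0, 1, 0, 0⟩ : Quaternion ℝ) x +
      dir2 (SRkernel s) (⟨0, 0, 1, 0⟩ : Quaternion ℝ) x +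
      dir2 (SRkernel s) (⟨0, 0, 0, 1⟩ : Quaternion ℝ) x =
    -4 * ((s * s - ((2 * x.re : ℝ) : Quaternion ℝ) * s +
      ((Quaternion.normSq x : ℝ) : Quaternion ℝ))⁻¹) ^ 2 * (s - star x) := by
  have hA : Aq s x ≠ 0 := h
  show _ = -4 * ((Aq s x)⁻¹) ^ 2 * (s - star x)
  have hd0 := dir2_eq s x 1 (((2 * x.re : ℝ) : Quaternion ℝ) - ((2:ℝ) : Quaternion ℝ) * s)
    hA (hQ0 s x)
  have hd1 := dir2_eq s x (⟨0,1,0,0⟩ : Quaternion ℝ) (((2 * x.imI : ℝ) : Quaternion ℝ))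
    hA (hQ1 s x _ rfl)
  have hd2 := dir2_eq s x (⟨0,0,1,0⟩ : Quaternion ℝ) (((2 * x.imJ : ℝ) : Quaternion ℝ))
    hA (hQ2 s x _ rfl)
  have hd3 := dir2_eq s x (⟨0,0,0,1⟩ : Quaternion ℝ) (((2 * x.imK : ℝ) : Quaternion ℝ))
    hA (hQ3 s x _ rfl)
  rw [hd0, hd1, hd2, hd3]
  exact final_algebra (Aq s x) (Aq s x)⁻¹ (s - star x) _ _ _ _ _ _ _ _
    (mul_inv_cancel₀ hA)
    (commute_swap (hPB0' s x))
    (commute_swap (Quaternion.coe_commute _ _).symm)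
    (commute_swap (Quaternion.coe_commute _ _).symm)
    (commute_swap (Quaternion.coe_commute _ _).symm)
    (key1' s x)
    (key3' s x _ _ _ rfl rfl rfl)
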